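/- Consider the classical Hamiltonian H(x, y, p₁, p₂) = (p₁² + p₂²)/2 + 2βx + γ/y² on the phase-space region y ≠ 0, and the function X(x, y, p₁, p₂) = p₁p₂² + (2γ/y²)·p₁ + 2βy·p₂. Then the canonical Poisson bracket {H, X} = (∂H/∂p₁)(∂X/∂x) + (∂H/∂p₂)(∂X/∂y) − (∂H/∂x)(∂X/∂p₁) − (∂H/∂y)(∂X/∂p₂) vanishes identically. -/

import Mathlib

theorem third_order_integral_V1a :
    ∀ β γ x y p₁ p₂ : ℝ, y ≠ 0 →
      let H : ℝ → ℝ → ℝ → ℝ → ℝ :=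
        fun x y p₁ p₂ => (p₁^2 + p₂^2)/2 + 2*β*x + γ/y^2
      let X : ℝ → ℝ → ℝ → ℝ → ℝ :=
        fun x y p₁ p₂ => p₁*p₂^2 + (2*γ/y^2)*p₁ + 2*β*y*p₂
      deriv (fun p => H x y p p₂) p₁ * deriv (fun a => X a y p₁ p₂) x
        + deriv (fun p => H x y p₁ p) p₂ * deriv (fun b => X x b p₁ p₂) y
        - deriv (fun a => H a y p₁ p₂) x * deriv (fun p => X x y p p₂) p₁
        - deriv (fun b => H x b p₁ p₂) y * deriv (fun p => X x y p₁ p) p₂ = 0 := by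
  intro β γ x y p₁ p₂ hy H X
  have hy2 : (y:ℝ)^2 ≠ 0 := pow_ne_zero _ hy
  have hy4 : ((y:ℝ)^2)^2 ≠ 0 := pow_ne_zero _ hy2
  have hpow : HasDerivAt (fun b : ℝ => b^2) (2*y) y := by
    simpa using (hasDerivAt_pow 2 y)
  have h1 : deriv (fun p : ℝ => H x y p p₂) p₁ = p₁ := by
    have : HasDerivAt (fun p : ℝ => (p^2 + p₂^2)/2 + 2*β*x + γ/y^2) p₁ p₁ := by
      have := (((hasDerivAt_pow 2 p₁).add_const (p₂^2)).div_const 2).add_const (2*β*x + γ/y^2)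
      simpa [add_assoc, mul_comm] using this
    simpa [H, add_assoc] using this.deriv
  have h2 : deriv (fun a : ℝ => X a y p₁ p₂) x = 0 := by
    simp [X]
  have h3 : deriv (fun p : ℝ => H x y p₁ p) p₂ = p₂ := by
    have : HasDerivAt (fun p : ℝ => (p₁^2 + p^2)/2 + 2*β*x + γ/y^2) p₂ p₂ := by
      have := (((hasDerivAt_pow 2 p₂).const_add (p₁^2)).div_const 2).add_const (2*β*x + γ/y^2)
      simpa [add_assoc, mul_comm] using this
    simpa [H, add_assoc] using this.deriv
  have h4 : deriv (fun a : ℝ => H a y p₁ p₂) x = 2*β := by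
    have : HasDerivAt (fun a : ℝ => (p₁^2 + p₂^2)/2 + 2*β*a + γ/y^2)
        (2*β) x := by
      have := (((hasDerivAt_id x).const_mul (2*β)).const_add ((p₁^2 + p₂^2)/2)).add_const (γ/y^2)
      simpa [add_assoc, mul_one] using this
    simpa [H, add_assoc] using this.deriv
  have h5 : deriv (fun p : ℝ => X x y p p₂) p₁ = p₂^2 + 2*γ/y^2 := by
    have : HasDerivAt (fun p : ℝ => p*p₂^2 + (2*γ/y^2)*p + 2*β*y*p₂)
        (p₂^2 + 2*γ/y^2) p₁ := by
      have := ((((hasDerivAt_id p₁).mul_const (p₂^2)).add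
        ((hasDerivAt_id p₁).const_mul (2*γ/y^2))).add_const (2*β*y*p₂))
      simpa [mul_one, one_mul] using this
    simpa [X] using this.deriv
  have h6 : deriv (fun p : ℝ => X x y p₁ p) p₂ = 2*p₁*p₂ + 2*β*y := by
    have : HasDerivAt (fun p : ℝ => p₁*p^2 + (2*γ/y^2)*p₁ + 2*β*y*p)
        (2*p₁*p₂ + 2*β*y) p₂ := by
      have := ((((hasDerivAt_pow 2 p₂).const_mul p₁).add_const ((2*γ/y^2)*p₁)).add
        ((hasDerivAt_id p₂).const_mul (2*β*y)))
      have h := this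
      refine h.congr_deriv ?_
      norm_num
      ring
    simpa [X] using this.deriv
  have hinv : HasDerivAt (fun b : ℝ => b^2) (2*y) y := hpow
  have h7 : deriv (fun b : ℝ => H x b p₁ p₂) y = -(2*γ*y)/(y^2)^2 := by
    have : HasDerivAt (fun b : ℝ => (p₁^2 + p₂^2)/2 + 2*β*x + γ/b^2)
        (-(2*γ*y)/(y^2)^2) y := by
      have hd : HasDerivAt (fun b : ℝ => γ/b^2) ((0*y^2 - γ*(2*y))/(y^2)^2) y :=
        (hasDerivAt_const y γ).div hpow hy2
      have := hd.const_add ((p₁^2 + p₂^2)/2 + 2*β*x)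
      refine this.congr_deriv ?_
      ring
    simpa [H, add_assoc] using this.deriv
  have h8 : deriv (fun b : ℝ => X x b p₁ p₂) y
      = -(2*γ*(2*y))/(y^2)^2*p₁ + 2*β*p₂ := by
    have : HasDerivAt (fun b : ℝ => p₁*p₂^2 + (2*γ/b^2)*p₁ + 2*β*b*p₂)
        (-(2*γ*(2*y))/(y^2)^2*p₁ + 2*β*p₂) y := by
      have hd : HasDerivAt (fun b : ℝ => 2*γ/b^2) ((0*y^2 - 2*γ*(2*y))/(y^2)^2) y :=
        (hasDerivAt_const y (2*γ)).div hpow hy2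
      have hd2 : HasDerivAt (fun b : ℝ => (2*γ/b^2)*p₁)
          ((0*y^2 - 2*γ*(2*y))/(y^2)^2*p₁) y := hd.mul_const p₁
      have hd3 : HasDerivAt (fun b : ℝ => 2*β*b*p₂) (2*β*p₂) y := by
        have := ((hasDerivAt_id y).const_mul (2*β)).mul_const p₂
        simpa [mul_one] using this
      have := (hd2.const_add (p₁*p₂^2)).add hd3
      refine this.congr_deriv ?_
      ring
    simpa [X] using this.deriv
  rw [h1, h2, h3, h4, h5, h6, h7, h8]
  field_simp
  ring
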